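/- Let T : ℝ₊^N → ℝ₊₊^N be a positive concave mapping whose lower bounding matrix M satisfies ρ(M) < 1. Then the accelerated mapping T_A(x) := (I − M)⁻¹·(T(x) − M·x) is a standard interference mapping: each of its components satisfies scalability (α·T_A(x) > T_A(α·x) componentwise for all α > 1 and x ∈ ℝ₊^N) and monotonicity (x ≤ y implies T_A(x) ≤ T_A(y) componentwise). -/

import Mathlib

open Matrix Filter Topology

noncomputable section

/-- `g` is a supergradient of `f` at `x`: the supergradient inequality holds for all
points `y` in the nonnegative orthant. -/
def IsSupergrad {N : ℕ} (f : (Fin N → ℝ) → ℝ) (x g : Fin N → ℝ) : Prop :=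
  ∀ y : Fin N → ℝ, 0 ≤ y → f y ≤ f x + ∑ i, g i * (y i - x i)

/-- `M` is the lower bounding matrix of the positive concave mapping with components `f i`:
`M i k` is the infimum of the `k`-th components of all supergradients of `f i` at points of
the nonnegative orthant. -/
def IsLBM {N : ℕ} (f : Fin N → (Fin N → ℝ) → ℝ) (M : Matrix (Fin N) (Fin N) ℝ) : Prop :=
  ∀ i k, M i k =
    sInf {t : ℝ | ∃ x : Fin N → ℝ, 0 ≤ x ∧ ∃ g : Fin N → ℝ, IsSupergrad (f i) x g ∧ g k = t}

/-- The spectral radius of a real matrix: the supremum of the moduli of its complex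
eigenvalues. -/
def specRad {N : ℕ} (M : Matrix (Fin N) (Fin N) ℝ) : ENNReal :=
  spectralRadius ℂ (M.map (algebraMap ℝ ℂ))

lemma exists_supergrad {N : ℕ} {f : (Fin N → ℝ) → ℝ}
    (hconc : ConcaveOn ℝ {x : Fin N → ℝ | 0 ≤ x} f)
    (hpos : ∀ x : Fin N → ℝ, 0 ≤ x → 0 < f x)
    {z : Fin N → ℝ} (hz : ∀ j, 0 < z j) :
    ∃ g : Fin N → ℝ, IsSupergrad f z g := by
  classical
  set C : Set ((Fin N → ℝ) × ℝ) := {p | 0 ≤ p.1 ∧ p.2 ≤ f p.1} with hC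
  have hz0 : (0 : Fin N → ℝ) ≤ z := fun j => (hz j).le
  have hCconv : Convex ℝ C := by
    intro p hp q hq a b ha hb hab
    refine ⟨add_nonneg (smul_nonneg ha hp.1) (smul_nonneg hb hq.1), ?_⟩
    have h2 := hconc.2 hp.1 hq.1 ha hb hab
    have e1 : (a • p + b • q).2 = a * p.2 + b * q.2 := rfl
    have e2 : (a • p + b • q).1 = a • p.1 + b • q.1 := rfl
    rw [e1, e2]
    have h3 : a * p.2 + b * q.2 ≤ a * f p.1 + b * f q.1 :=
      add_le_add (mul_le_mul_of_nonneg_left hp.2 ha) (mul_le_mul_of_nonneg_left hq.2 hb)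
    exact h3.trans h2
  have hVopen : IsOpen {p : (Fin N → ℝ) × ℝ | (∀ j, 0 < p.1 j) ∧ p.2 < 0} := by
    have h1 : IsOpen {y : Fin N → ℝ | ∀ j, 0 < y j} := by
      have he : {y : Fin N → ℝ | ∀ j, 0 < y j} = Set.pi Set.univ (fun _ => Set.Ioi (0:ℝ)) := by
        ext y; simp [Set.mem_pi]
      rw [he]; exact isOpen_set_pi Set.finite_univ fun i _ => isOpen_Ioi
    have he2 : {p : (Fin N → ℝ) × ℝ | (∀ j, 0 < p.1 j) ∧ p.2 < 0}
        = {y : Fin N → ℝ | ∀ j, 0 < y j} ×ˢ Set.Iio (0:ℝ) := by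
      ext p; simp [Set.mem_prod]
    rw [he2]; exact h1.prod isOpen_Iio
  have hVsub : {p : (Fin N → ℝ) × ℝ | (∀ j, 0 < p.1 j) ∧ p.2 < 0} ⊆ C := by
    rintro p ⟨h1, h2⟩
    exact ⟨fun j => (h1 j).le, le_of_lt (h2.trans (hpos _ fun j => (h1 j).le))⟩
  have hw : ((z, (-1:ℝ)) : (Fin N → ℝ) × ℝ) ∈ interior C :=
    (hVopen.subset_interior_iff.mpr hVsub) ⟨hz, by norm_num⟩
  have hpne : ((z, f z) : (Fin N → ℝ) × ℝ) ∉ interior C := by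
    intro h
    rw [mem_interior_iff_mem_nhds, Metric.mem_nhds_iff] at h
    obtain ⟨ε, hε, hball⟩ := h
    have hmem : ((z, f z + ε/2) : (Fin N → ℝ) × ℝ) ∈ Metric.ball ((z, f z) : (Fin N → ℝ) × ℝ) ε := by
      rw [Metric.mem_ball, Prod.dist_eq]
      have h1 : dist z z = 0 := dist_self z
      have h2 : dist (f z + ε/2) (f z) = ε/2 := by
        rw [Real.dist_eq, add_sub_cancel_left, abs_of_nonneg (half_pos hε).le]
      rw [h1, h2, max_eq_right (by linarith)]
      linarith
    have := (hball hmem).2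
    simp only at this
    linarith
  obtain ⟨L, hL⟩ := geometric_hahn_banach_open_point (hCconv.interior) isOpen_interior hpne
  have hLC : ∀ a ∈ C, L a ≤ L (z, f z) := by
    intro a ha
    have key : ∀ t : ℝ, t ∈ Set.Ioo (0:ℝ) 1 →
        L (t • ((z, (-1:ℝ)) : (Fin N → ℝ) × ℝ) + (1 - t) • a) < L (z, f z) := by
      intro t ht
      exact hL _ (hCconv.combo_interior_self_mem_interior hw ha ht.1
        (by linarith [ht.2]) (by ring))
    have hcont : Continuous fun t : ℝ =>
        L (t • ((z, (-1:ℝ)) : (Fin N → ℝ) × ℝ) + (1 - t) • a) :=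
      L.continuous.comp ((continuous_id.smul continuous_const).add
        ((continuous_const.sub continuous_id).smul continuous_const))
    have hten : Tendsto (fun t : ℝ =>
        L (t • ((z, (-1:ℝ)) : (Fin N → ℝ) × ℝ) + (1 - t) • a)) (𝓝[>] (0:ℝ)) (𝓝 (L a)) := by
      have := hcont.tendsto' 0 (L a) (by simp)
      exact this.mono_left nhdsWithin_le_nhds
    refine le_of_tendsto hten ?_
    filter_upwards [Ioo_mem_nhdsGT_of_mem (Set.mem_Ico.mpr ⟨le_rfl, one_pos⟩)] with t ht
    exact (key t ht).le
  set c : ℝ := L ((0 : Fin N → ℝ), (1:ℝ)) with hcdef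
  set φ : Fin N → ℝ := fun j => L ((Pi.single j 1 : Fin N → ℝ), (0:ℝ)) with hφdef
  have hdec : ∀ (y : Fin N → ℝ) (t : ℝ), L (y, t) = (∑ j, y j * φ j) + t * c := by
    intro y t
    have h2 : ((y, t) : (Fin N → ℝ) × ℝ)
        = ((y, (0:ℝ)) : (Fin N → ℝ) × ℝ) + t • (((0 : Fin N → ℝ), (1:ℝ)) : (Fin N → ℝ) × ℝ) := by
      rw [Prod.ext_iff]; constructor
      · simp
      · simp
    have h3 : ((y, (0:ℝ)) : (Fin N → ℝ) × ℝ)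
        = ∑ j, (y j) • (((Pi.single j 1 : Fin N → ℝ), (0:ℝ)) : (Fin N → ℝ) × ℝ) := by
      rw [Prod.ext_iff]; constructor
      · rw [Prod.fst_sum]
        simp only [Prod.smul_mk]
        have : ∀ j, (y j) • (Pi.single j 1 : Fin N → ℝ) = Pi.single j (y j) := by
          intro j; rw [← Pi.single_smul]; norm_num
        simp only [this]
        exact (Finset.univ_sum_single y).symm
      · rw [Prod.snd_sum]
        simp
    rw [h2, map_add, _root_.map_smul, h3, map_sum]
    simp only [_root_.map_smul, smul_eq_mul]
    rfl
  have hzC : ∀ t : ℝ, t ≤ f z → ((z, t) : (Fin N → ℝ) × ℝ) ∈ C := fun t ht => ⟨hz0, ht⟩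
  have hc0 : 0 ≤ c := by
    have h := hLC _ (hzC (f z - 1) (by linarith))
    rw [hdec, hdec] at h
    rw [sub_one_mul] at h
    linarith
  have hsing : ∀ (j : Fin N) (a : ℝ), ∑ k, ((Pi.single j a : Fin N → ℝ) k) * φ k = a * φ j := by
    intro j a
    rw [Finset.sum_eq_single j]
    · simp
    · intro b _ hb; simp [Pi.single_apply, hb]
    · intro h; exact absurd (Finset.mem_univ j) h
  have hcne : c ≠ 0 := by
    intro h0
    have hup : ∀ y : Fin N → ℝ, 0 ≤ y → (∑ k, y k * φ k) ≤ ∑ k, z k * φ k := by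
      intro y hy
      have h := hLC (y, f y) ⟨hy, le_rfl⟩
      rw [hdec, hdec, h0] at h
      simpa using h
    have hφ0 : ∀ j, φ j = 0 := by
      intro j
      have h1 : φ j ≤ 0 := by
        have hyn : (0 : Fin N → ℝ) ≤ z + (Pi.single j 1 : Fin N → ℝ) := by
          intro i
          have hsnn : (0:ℝ) ≤ (Pi.single j 1 : Fin N → ℝ) i := by
            rcases eq_or_ne i j with h | h <;> simp [Pi.single_apply, h]
          have := (hz i).le
          simp only [Pi.add_apply, Pi.zero_apply]
          linarith
        have h := hup _ hyn
        have hexp : ∑ k, ((z + (Pi.single j 1 : Fin N → ℝ)) k) * φ k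
            = (∑ k, z k * φ k) + 1 * φ j := by
          simp_rw [Pi.add_apply, add_mul]
          rw [Finset.sum_add_distrib, hsing j 1]
        rw [hexp] at h
        linarith
      have h2 : 0 ≤ φ j := by
        have hyn : (0 : Fin N → ℝ) ≤ z - (Pi.single j (z j) : Fin N → ℝ) := by
          intro i
          rcases eq_or_ne i j with h | h <;>
            simp [Pi.single_apply, h, (hz i).le]
        have h := hup _ hyn
        have hexp : ∑ k, ((z - (Pi.single j (z j) : Fin N → ℝ)) k) * φ k
            = (∑ k, z k * φ k) - z j * φ j := by
          simp_rw [Pi.sub_apply, sub_mul]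
          rw [Finset.sum_sub_distrib, hsing j (z j)]
        rw [hexp] at h
        nlinarith [hz j]
      linarith
    have hfalse := hL _ hw
    rw [hdec, hdec] at hfalse
    simp [hφ0, h0] at hfalse
  have hcpos : 0 < c := lt_of_le_of_ne hc0 (Ne.symm hcne)
  refine ⟨fun j => -φ j / c, fun y hy => ?_⟩
  have h := hLC (y, f y) ⟨hy, le_rfl⟩
  rw [hdec, hdec] at h
  have hsum : ∑ k, (-φ k / c) * (y k - z k) = ((∑ k, z k * φ k) - ∑ k, y k * φ k) / c := by
    rw [← Finset.sum_sub_distrib, Finset.sum_div]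
    refine Finset.sum_congr rfl fun k _ => ?_
    field_simp; ring
  rw [hsum]
  have h2 : (f y - f z) * c ≤ (∑ k, z k * φ k) - ∑ k, y k * φ k := by
    rw [sub_mul]; linarith
  have h3 := (le_div_iff₀ hcpos).mpr h2
  linarith

lemma supergrad_nonneg {N : ℕ} {f : (Fin N → ℝ) → ℝ}
    (hpos : ∀ x : Fin N → ℝ, 0 ≤ x → 0 < f x)
    {x g : Fin N → ℝ} (hx : 0 ≤ x) (hg : IsSupergrad f x g) (k : Fin N) : 0 ≤ g k := by
  by_contra hneg
  push_neg at hneg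
  have hfx := hpos x hx
  set t : ℝ := (f x + 1) / (-(g k)) with ht
  have hgk : 0 < -(g k) := by linarith
  have htpos : 0 < t := div_pos (by linarith) hgk
  set y : Fin N → ℝ := x + Pi.single k t with hy
  have hy0 : 0 ≤ y := by
    intro i
    have h1 : (0:ℝ) ≤ (Pi.single k t : Fin N → ℝ) i := by
      rcases eq_or_ne i k with h | h <;> simp [Pi.single_apply, h, htpos.le]
    have := hx i
    simp only [Pi.add_apply, Pi.zero_apply, hy]
    simp only [Pi.zero_apply] at this
    linarith
  have hsum : ∑ i, g i * (y i - x i) = g k * t := by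
    have : ∀ i, y i - x i = (Pi.single k t : Fin N → ℝ) i := by
      intro i; simp [hy]
    simp_rw [this]
    rw [Finset.sum_eq_single k]
    · simp
    · intro b _ hb; simp [Pi.single_apply, hb]
    · intro h; exact absurd (Finset.mem_univ k) h
  have hineq := hg y hy0
  rw [hsum] at hineq
  have hgt : g k * t = -(f x + 1) := by
    rw [ht, mul_div_assoc', div_eq_iff hgk.ne']; ring
  rw [hgt] at hineq
  have := hpos y hy0
  linarith

lemma step' {N : ℕ} {f : (Fin N → ℝ) → ℝ}
    (hconc : ConcaveOn ℝ {x : Fin N → ℝ | 0 ≤ x} f)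
    (husc : UpperSemicontinuousOn f {x : Fin N → ℝ | 0 ≤ x})
    (hpos : ∀ x : Fin N → ℝ, 0 ≤ x → 0 < f x)
    {m : ℝ} (k : Fin N)
    (hm : ∀ x g : Fin N → ℝ, 0 ≤ x → IsSupergrad f x g → m ≤ g k)
    {u : Fin N → ℝ} (hu : 0 ≤ u) {s : ℝ} (hs : 0 ≤ s) :
    f u + m * s ≤ f (u + Pi.single k s) := by
  classical
  -- step A : interior version
  have hA : ∀ ε : ℝ, 0 < ε →
      f (u + ε • (1 : Fin N → ℝ)) + m * s ≤ f (u + ε • (1 : Fin N → ℝ) + Pi.single k s) := by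
    intro ε hε
    set z : Fin N → ℝ := u + ε • (1 : Fin N → ℝ) + Pi.single k s with hzdef
    have hzpos : ∀ j, 0 < z j := by
      intro j
      have h1 : (0:ℝ) ≤ (Pi.single k s : Fin N → ℝ) j := by
        rcases eq_or_ne j k with h | h <;> simp [Pi.single_apply, h, hs]
      have := hu j
      simp only [hzdef, Pi.add_apply, Pi.smul_apply, Pi.one_apply, smul_eq_mul, mul_one,
        Pi.zero_apply] at *
      linarith
    obtain ⟨g, hg⟩ := exists_supergrad hconc hpos hzpos
    have huε : (0:Fin N → ℝ) ≤ u + ε • (1 : Fin N → ℝ) := by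
      intro j
      have := hu j
      simp only [Pi.add_apply, Pi.smul_apply, Pi.one_apply, smul_eq_mul, mul_one,
        Pi.zero_apply] at *
      linarith
    have h1 := hg (u + ε • (1 : Fin N → ℝ)) huε
    have hsum : ∑ i, g i * ((u + ε • (1 : Fin N → ℝ)) i - z i) = -(g k * s) := by
      have : ∀ i, (u + ε • (1 : Fin N → ℝ)) i - z i = -((Pi.single k s : Fin N → ℝ) i) := by
        intro i; simp [hzdef]
      simp_rw [this, mul_neg]
      rw [Finset.sum_neg_distrib]
      congr 1
      rw [Finset.sum_eq_single k]
      · simp [mul_comm]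
      · intro b _ hb; simp [Pi.single_apply, hb]
      · intro h; exact absurd (Finset.mem_univ k) h
    rw [hsum] at h1
    have hgk := hm z g (fun j => (hzpos j).le) hg
    have h2 : m * s ≤ g k * s := mul_le_mul_of_nonneg_right hgk hs
    linarith
  -- step B : concavity bound
  have hB : ∀ ε : ℝ, 0 < ε → ε ≤ 1 → (1 - ε) * f u ≤ f (u + ε • (1 : Fin N → ℝ)) := by
    intro ε hε hε1
    have hmem1 : u ∈ {x : Fin N → ℝ | 0 ≤ x} := hu
    have hmem2 : u + (1 : Fin N → ℝ) ∈ {x : Fin N → ℝ | 0 ≤ x} := by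
      intro j; have := hu j
      simp only [Pi.add_apply, Pi.one_apply, Pi.zero_apply] at *
      linarith
    have hcomb := hconc.2 hmem1 hmem2 (by linarith : (0:ℝ) ≤ 1 - ε) hε.le (by ring)
    have heq : (1 - ε) • u + ε • (u + (1 : Fin N → ℝ)) = u + ε • (1 : Fin N → ℝ) := by
      funext j
      simp only [Pi.add_apply, Pi.smul_apply, Pi.one_apply, smul_eq_mul, mul_one]
      ring
    rw [heq] at hcomb
    have hp2 := hpos _ hmem2
    have : (0:ℝ) ≤ ε * f (u + (1 : Fin N → ℝ)) := mul_nonneg hε.le hp2.le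
    simp only [smul_eq_mul] at hcomb
    linarith
  -- limit
  set w : Fin N → ℝ := u + Pi.single k s with hwdef
  have hw0 : 0 ≤ w := by
    intro j
    have h1 : (0:ℝ) ≤ (Pi.single k s : Fin N → ℝ) j := by
      rcases eq_or_ne j k with h | h <;> simp [Pi.single_apply, h, hs]
    have := hu j
    simp only [hwdef, Pi.add_apply, Pi.zero_apply] at *
    linarith
  have hfu := hpos u hu
  refine le_of_forall_pos_le_add ?_
  intro δ hδ
  have husc' := husc w hw0
  have hev : ∀ᶠ y in 𝓝[{x : Fin N → ℝ | 0 ≤ x}] w, f y < f w + δ/2 :=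
    husc' (f w + δ/2) (by linarith)
  have hpath : Tendsto (fun ε : ℝ => w + ε • (1 : Fin N → ℝ)) (𝓝[>] (0:ℝ))
      (𝓝[{x : Fin N → ℝ | 0 ≤ x}] w) := by
    apply tendsto_nhdsWithin_of_tendsto_nhds_of_eventually_within
    · have hcont : Continuous (fun ε : ℝ => w + ε • (1 : Fin N → ℝ)) :=
        continuous_const.add (continuous_id.smul continuous_const)
      have := hcont.tendsto' 0 w (by simp)
      exact this.mono_left nhdsWithin_le_nhds
    · filter_upwards [self_mem_nhdsWithin] with ε hε
      have hε' : 0 < ε := hε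
      intro j
      have := hw0 j
      simp only [Pi.add_apply, Pi.smul_apply, Pi.one_apply, smul_eq_mul, mul_one,
        Pi.zero_apply] at *
      linarith
  have hev2 := hpath.eventually hev
  set εb : ℝ := min 1 (δ / (2 * (f u + 1))) with hεb
  have hεbpos : 0 < εb := by
    apply lt_min one_pos
    positivity
  have hev3 : Set.Ioo (0:ℝ) εb ∈ 𝓝[>] (0:ℝ) :=
    Ioo_mem_nhdsGT_of_mem (Set.mem_Ico.mpr ⟨le_rfl, hεbpos⟩)
  obtain ⟨ε, hε1, hε2⟩ := (hev2.and (eventually_mem_set.mpr hev3)).exists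
  obtain ⟨hε2a, hε2b⟩ := hε2
  have hεle1 : ε ≤ 1 := le_trans hε2b.le (min_le_left _ _)
  have hεled : ε ≤ δ / (2 * (f u + 1)) := le_trans hε2b.le (min_le_right _ _)
  have hA' := hA ε hε2a
  have hB' := hB ε hε2a hεle1
  have hcomm : w + ε • (1 : Fin N → ℝ) = u + ε • (1 : Fin N → ℝ) + Pi.single k s := by
    rw [hwdef]; abel
  rw [hcomm] at hε1
  have hεfu : ε * f u ≤ δ/2 := by
    have hc : (0:ℝ) < 2 * (f u + 1) := by linarith
    have := mul_le_mul_of_nonneg_right hεled (le_of_lt hfu)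
    have h2 : δ / (2 * (f u + 1)) * f u ≤ δ/2 := by
      rw [div_mul_eq_mul_div, div_le_div_iff₀ hc (by norm_num)]
      nlinarith
    nlinarith
  nlinarith [hε1, hA', hB']

lemma key' {N : ℕ} {f : (Fin N → ℝ) → ℝ}
    (hconc : ConcaveOn ℝ {x : Fin N → ℝ | 0 ≤ x} f)
    (husc : UpperSemicontinuousOn f {x : Fin N → ℝ | 0 ≤ x})
    (hpos : ∀ x : Fin N → ℝ, 0 ≤ x → 0 < f x)
    {m : Fin N → ℝ}
    (hm : ∀ (k : Fin N) (x g : Fin N → ℝ), 0 ≤ x → IsSupergrad f x g → m k ≤ g k)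
    {x y : Fin N → ℝ} (hx : 0 ≤ x) (hxy : x ≤ y) :
    f x + ∑ k, m k * (y k - x k) ≤ f y := by
  classical
  have hy0 : 0 ≤ y := le_trans hx hxy
  have main : ∀ S : Finset (Fin N),
      f x + ∑ k ∈ S, m k * (y k - x k) ≤ f (fun j => if j ∈ S then y j else x j) := by
    intro S
    induction S using Finset.induction_on with
    | empty => simp
    | @insert a S ha ih =>
      set u : Fin N → ℝ := fun j => if j ∈ S then y j else x j with hu
      have hu0 : 0 ≤ u := by
        intro j
        by_cases h : j ∈ S
        · simpa [hu, h] using hy0 j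
        · simpa [hu, h] using hx j
      have hstep := step' hconc husc hpos a (hm a) hu0 (sub_nonneg.mpr (hxy a))
      have hv : (fun j => if j ∈ insert a S then y j else x j) = u + Pi.single a (y a - x a) := by
        funext j
        rcases eq_or_ne j a with h | h
        · subst h
          simp [hu, ha, Finset.mem_insert]
        · simp [hu, Finset.mem_insert, h, Pi.single_apply]
      rw [hv, Finset.sum_insert ha]
      calc f x + (m a * (y a - x a) + ∑ k ∈ S, m k * (y k - x k))
          = (f x + ∑ k ∈ S, m k * (y k - x k)) + m a * (y a - x a) := by ring
        _ ≤ f u + m a * (y a - x a) := by linarith [ih]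
        _ ≤ f (u + Pi.single a (y a - x a)) := hstep
  have hfin := main Finset.univ
  simpa using hfin

section MatrixFacts


attribute [local instance] Matrix.linftyOpNormedRing Matrix.linftyOpNormedAlgebra

lemma pow_entry_tendsto_zero {N : ℕ} (M : Matrix (Fin N) (Fin N) ℝ)
    (hrad : specRad M < 1) (i k : Fin N) :
    Tendsto (fun n : ℕ => (M ^ n) i k) atTop (𝓝 0) := by
  set A : Matrix (Fin N) (Fin N) ℂ := M.map (algebraMap ℝ ℂ) with hA
  have hgel := spectrum.pow_nnnorm_pow_one_div_tendsto_nhds_spectralRadius A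
  obtain ⟨r, hr1, hr2⟩ := ENNReal.lt_iff_exists_nnreal_btwn.mp hrad
  have hev : ∀ᶠ n : ℕ in atTop, (‖A ^ n‖₊ : ENNReal) ^ (1/(n:ℝ)) < (r : ENNReal) :=
    hgel.eventually_lt_const hr1
  have hev2 : ∀ᶠ n : ℕ in atTop, ‖A ^ n‖ ≤ (r:ℝ) ^ n := by
    filter_upwards [hev, eventually_ge_atTop 1] with n hn hn1
    have hne : ((n:ℝ)) ≠ 0 := by positivity
    have hx : (((‖A ^ n‖₊ : ENNReal)) ^ (1/(n:ℝ))) ^ (n:ℕ) ≤ ((r:ENNReal)) ^ (n:ℕ) :=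
      pow_le_pow_left₀ zero_le hn.le n
    rw [← ENNReal.rpow_natCast ((‖A ^ n‖₊ : ENNReal) ^ (1/(n:ℝ))) n, ← ENNReal.rpow_mul,
      one_div, inv_mul_cancel₀ hne, ENNReal.rpow_one] at hx
    have hx2 : ‖A ^ n‖₊ ≤ r ^ n := by exact_mod_cast hx
    calc ‖A ^ n‖ = ((‖A ^ n‖₊ : ℝ)) := rfl
      _ ≤ ((r ^ n : NNReal) : ℝ) := by exact_mod_cast hx2
      _ = (r:ℝ) ^ n := by push_cast; ring
  have hnorm0 : Tendsto (fun n : ℕ => ‖A ^ n‖) atTop (𝓝 0) := by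
    apply squeeze_zero' (Eventually.of_forall fun n => norm_nonneg _) hev2
    have hrlt : (r:ℝ) < 1 := by exact_mod_cast hr2
    exact tendsto_pow_atTop_nhds_zero_of_lt_one r.2 hrlt
  apply squeeze_zero_norm' ?_ hnorm0
  filter_upwards with n
  have hmap : A ^ n = (M ^ n).map (algebraMap ℝ ℂ) := by
    rw [hA, ← RingHom.mapMatrix_apply, ← RingHom.mapMatrix_apply, map_pow]
  have hentry : ‖(A ^ n) i k‖ = ‖(M ^ n) i k‖ := by
    rw [hmap]
    simp [Matrix.map_apply, Complex.norm_real]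
  have hle : ‖(A ^ n) i k‖₊ ≤ ‖A ^ n‖₊ := by
    rw [Matrix.linfty_opNNNorm_def]
    calc ‖(A ^ n) i k‖₊ ≤ ∑ j, ‖(A ^ n) i j‖₊ :=
          Finset.single_le_sum (f := fun j => ‖(A ^ n) i j‖₊) (fun j _ => zero_le) (Finset.mem_univ k)
      _ ≤ _ := Finset.le_sup (f := fun a => ∑ j, ‖(A ^ n) a j‖₊) (Finset.mem_univ i)
  rw [← hentry]
  exact_mod_cast hle

lemma inv_one_sub_entry_ge {N : ℕ} (M : Matrix (Fin N) (Fin N) ℝ)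
    (hM0 : ∀ i k, 0 ≤ M i k) (hrad : specRad M < 1) (i k : Fin N) :
    (1 : Matrix (Fin N) (Fin N) ℝ) i k ≤ (1 - M)⁻¹ i k := by
  classical
  have hent := pow_entry_tendsto_zero M hrad
  have hMn0 : ∀ (n : ℕ) (a b : Fin N), 0 ≤ (M ^ n) a b := by
    intro n
    induction n with
    | zero => intro a b; rw [pow_zero]; rcases eq_or_ne a b with h|h <;> simp [Matrix.one_apply, h]
    | succ n ih =>
      intro a b
      rw [pow_succ, Matrix.mul_apply]
      exact Finset.sum_nonneg fun j _ => mul_nonneg (ih a j) (hM0 j b)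
  have hgeom : ∀ n : ℕ, (1 - M) * (∑ j ∈ Finset.range n, M ^ j) = 1 - M ^ n := by
    intro n
    have h := mul_geom_sum (M : Matrix (Fin N) (Fin N) ℝ) n
    calc (1 - M) * (∑ j ∈ Finset.range n, M ^ j)
        = -((M - 1) * ∑ j ∈ Finset.range n, M ^ j) := by rw [← neg_sub M 1, neg_mul]
      _ = -(M ^ n - 1) := by rw [h]
      _ = 1 - M ^ n := neg_sub _ _
  -- 1 - M is invertible
  have htendsto1 : Tendsto (fun n : ℕ => (1 : Matrix (Fin N) (Fin N) ℝ) - M ^ n) atTop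
      (𝓝 (1 : Matrix (Fin N) (Fin N) ℝ)) := by
    have : ∀ a b : Fin N, Tendsto (fun n : ℕ => ((1 : Matrix (Fin N) (Fin N) ℝ) - M ^ n) a b)
        atTop (𝓝 ((1 : Matrix (Fin N) (Fin N) ℝ) a b)) := by
      intro a b
      have := (tendsto_const_nhds (x := (1 : Matrix (Fin N) (Fin N) ℝ) a b)
        (f := atTop (α := ℕ))).sub (hent a b)
      simpa using this
    exact tendsto_pi_nhds.mpr fun a => tendsto_pi_nhds.mpr fun b => this a b
  have hdetc : Continuous (Matrix.det : Matrix (Fin N) (Fin N) ℝ → ℝ) :=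
    Continuous.matrix_det continuous_id
  have hdet1 : Tendsto (fun n : ℕ => ((1 : Matrix (Fin N) (Fin N) ℝ) - M ^ n).det) atTop
      (𝓝 (1:ℝ)) := by
    have := (hdetc.tendsto (1 : Matrix (Fin N) (Fin N) ℝ)).comp htendsto1
    simpa [Function.comp_def] using this
  obtain ⟨n₀, hn₀⟩ := (hdet1.eventually_ne (one_ne_zero)).exists
  have hdetM : IsUnit (1 - M).det := by
    rw [isUnit_iff_ne_zero]
    intro h0
    apply hn₀
    have := congrArg Matrix.det (hgeom n₀)
    rw [Matrix.det_mul, h0, zero_mul] at this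
    exact this.symm
  set B := (1 - M)⁻¹ with hB
  have hBl : B * (1 - M) = 1 := Matrix.nonsing_inv_mul _ hdetM
  have hrepr : ∀ n : ℕ, (∑ j ∈ Finset.range n, M ^ j) = B - B * M ^ n := by
    intro n
    have h2 := congrArg (fun X => B * X) (hgeom n)
    simp only [← mul_assoc, hBl, one_mul, mul_sub, mul_one] at h2
    exact h2
  have hBM0 : Tendsto (fun n : ℕ => (B * M ^ n) i k) atTop (𝓝 0) := by
    have := tendsto_finset_sum (Finset.univ : Finset (Fin N))
      (fun j _ => ((hent j k).const_mul (B i j)))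
    simp only [mul_zero, Finset.sum_const_zero] at this
    apply this.congr
    intro n
    rw [Matrix.mul_apply]
  have hlim : Tendsto (fun n : ℕ => (∑ j ∈ Finset.range n, M ^ j) i k) atTop (𝓝 (B i k)) := by
    have heq : (fun n : ℕ => (∑ j ∈ Finset.range n, M ^ j) i k)
        = fun n => B i k - (B * M ^ n) i k := by
      funext n
      rw [hrepr n, Matrix.sub_apply]
    rw [heq]
    simpa using (tendsto_const_nhds (x := B i k) (f := atTop (α := ℕ))).sub hBM0
  refine ge_of_tendsto hlim ?_
  filter_upwards [eventually_ge_atTop 1] with n hn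
  have hsum : (∑ j ∈ Finset.range n, M ^ j) i k = ∑ j ∈ Finset.range n, (M ^ j) i k := by
    simp [Matrix.sum_apply]
  rw [hsum]
  have h0mem : 0 ∈ Finset.range n := Finset.mem_range.mpr (by omega)
  calc (1 : Matrix (Fin N) (Fin N) ℝ) i k = (M ^ 0) i k := by rw [pow_zero]
    _ ≤ ∑ j ∈ Finset.range n, (M ^ j) i k :=
        Finset.single_le_sum (fun j _ => hMn0 j i k) h0mem

end MatrixFacts

/-- The accelerated mapping of a positive concave mapping is a standard interference
mapping: it is positive, scalable and monotone. -/
theorem accelerated_mapping_standard_interference {N : ℕ} (f : Fin N → (Fin N → ℝ) → ℝ)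
    (hconc : ∀ i, ConcaveOn ℝ {x : Fin N → ℝ | 0 ≤ x} (f i))
    (husc : ∀ i, UpperSemicontinuousOn (f i) {x : Fin N → ℝ | 0 ≤ x})
    (hpos : ∀ i, ∀ x : Fin N → ℝ, 0 ≤ x → 0 < f i x)
    (M : Matrix (Fin N) (Fin N) ℝ) (hM : IsLBM f M)
    (hrad : specRad M < 1)
    (TA : (Fin N → ℝ) → (Fin N → ℝ))
    (hTA : ∀ x : Fin N → ℝ, TA x = (1 - M)⁻¹ *ᵥ ((fun i => f i x) - M *ᵥ x)) :
    (∀ x : Fin N → ℝ, 0 ≤ x → ∀ i, 0 < TA x i) ∧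
    (∀ x : Fin N → ℝ, 0 ≤ x → ∀ α : ℝ, 1 < α → ∀ i, TA (α • x) i < α * TA x i) ∧
    (∀ x y : Fin N → ℝ, 0 ≤ x → 0 ≤ y → x ≤ y → TA x ≤ TA y) := by
  classical
  have hbdd : ∀ i k : Fin N, BddBelow {t : ℝ | ∃ x : Fin N → ℝ, 0 ≤ x ∧
      ∃ g : Fin N → ℝ, IsSupergrad (f i) x g ∧ g k = t} := by
    intro i k
    refine ⟨0, ?_⟩
    rintro t ⟨x, hx, g, hg, rfl⟩
    exact supergrad_nonneg (hpos i) hx hg k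
  have hm_le : ∀ (i k : Fin N) (x g : Fin N → ℝ), 0 ≤ x → IsSupergrad (f i) x g →
      M i k ≤ g k := by
    intro i k x g hx hg
    rw [hM i k]
    exact csInf_le (hbdd i k) ⟨x, hx, g, hg, rfl⟩
  have hM0 : ∀ i k, 0 ≤ M i k := by
    intro i k
    rw [hM i k]
    rcases Set.eq_empty_or_nonempty {t : ℝ | ∃ x : Fin N → ℝ, 0 ≤ x ∧
        ∃ g : Fin N → ℝ, IsSupergrad (f i) x g ∧ g k = t} with he | hne
    · rw [he, Real.sInf_empty]
    · refine le_csInf hne ?_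
      rintro t ⟨x, hx, g, hg, rfl⟩
      exact supergrad_nonneg (hpos i) hx hg k
  have hkey : ∀ (i : Fin N) (x y : Fin N → ℝ), 0 ≤ x → x ≤ y →
      f i x + ∑ k, M i k * (y k - x k) ≤ f i y := by
    intro i x y hx hxy
    exact key' (hconc i) (husc i) (hpos i) (fun k x g hx hg => hm_le i k x g hx hg) hx hxy
  have hBent : ∀ i k, (1 : Matrix (Fin N) (Fin N) ℝ) i k ≤ (1 - M)⁻¹ i k :=
    fun i k => inv_one_sub_entry_ge M hM0 hrad i k
  have hB0 : ∀ i k, 0 ≤ (1 - M)⁻¹ i k := by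
    intro i k
    refine le_trans ?_ (hBent i k)
    rcases eq_or_ne i k with h | h <;> simp [Matrix.one_apply, h]
  have hBii : ∀ i, 1 ≤ (1 - M)⁻¹ i i := by
    intro i
    have := hBent i i
    simpa [Matrix.one_apply] using this
  have hTAexp : ∀ (x : Fin N → ℝ) (i : Fin N),
      TA x i = ∑ k, (1 - M)⁻¹ i k * (f k x - ∑ j, M k j * x j) := by
    intro x i
    rw [hTA]
    simp [Matrix.mulVec, dotProduct]
  have hlow : ∀ (x : Fin N → ℝ), 0 ≤ x → ∀ k, f k 0 + ∑ j, M k j * x j ≤ f k x := by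
    intro x hx k
    have := hkey k 0 x le_rfl hx
    simpa using this
  refine ⟨?_, ?_, ?_⟩
  · -- positivity
    intro x hx i
    rw [hTAexp]
    have hterm : ∀ k, 0 ≤ (1 - M)⁻¹ i k * (f k x - ∑ j, M k j * x j) := by
      intro k
      have h1 := hlow x hx k
      have h2 := hpos k 0 le_rfl
      exact mul_nonneg (hB0 i k) (by linarith)
    have hstrict : 0 < (1 - M)⁻¹ i i * (f i x - ∑ j, M i j * x j) := by
      have h1 := hlow x hx i
      have h2 := hpos i 0 le_rfl
      have h3 : 0 < (1 - M)⁻¹ i i := lt_of_lt_of_le one_pos (hBii i)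
      exact mul_pos h3 (by linarith)
    calc (0:ℝ) < (1 - M)⁻¹ i i * (f i x - ∑ j, M i j * x j) := hstrict
      _ ≤ ∑ k, (1 - M)⁻¹ i k * (f k x - ∑ j, M k j * x j) :=
          Finset.single_le_sum (f := fun k => (1 - M)⁻¹ i k * (f k x - ∑ j, M k j * x j))
            (fun k _ => hterm k) (Finset.mem_univ i)
  · -- scalability
    intro x hx α hα i
    have hαpos : (0:ℝ) < α := by linarith
    have hax : (0:Fin N → ℝ) ≤ α • x := smul_nonneg hαpos.le hx
    have hscale : ∀ k, f k (α • x) + (α - 1) * f k 0 ≤ α * f k x := by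
      intro k
      have hmem1 : (α • x) ∈ {x : Fin N → ℝ | 0 ≤ x} := hax
      have hmem0 : (0:Fin N → ℝ) ∈ {x : Fin N → ℝ | 0 ≤ x} := by
        exact le_refl (0 : Fin N → ℝ)
      have h := (hconc k).2 hmem1 hmem0 (show (0:ℝ) ≤ 1/α by positivity)
        (show (0:ℝ) ≤ 1 - 1/α by rw [sub_nonneg, div_le_one hαpos]; linarith)
        (show 1/α + (1 - 1/α) = 1 by ring)
      have hxx : (1/α) • (α • x) + (1 - 1/α) • (0:Fin N → ℝ) = x := by
        rw [smul_zero, add_zero, smul_smul, one_div, inv_mul_cancel₀ (ne_of_gt hαpos), one_smul]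
      rw [hxx] at h
      simp only [smul_eq_mul] at h
      have h2 := mul_le_mul_of_nonneg_left h hαpos.le
      have h3 : α * (1/α * f k (α • x) + (1 - 1/α) * f k 0)
          = f k (α • x) + (α - 1) * f k 0 := by field_simp
      rw [h3] at h2
      exact h2
    have hSα : ∀ k, ∑ j, M k j * (α • x) j = α * ∑ j, M k j * x j := by
      intro k
      rw [Finset.mul_sum]
      refine Finset.sum_congr rfl fun j _ => ?_
      simp only [Pi.smul_apply, smul_eq_mul]
      ring
    rw [hTAexp, hTAexp, Finset.mul_sum]
    apply Finset.sum_lt_sum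
    · intro k _
      rw [hSα k]
      have h1 : f k (α • x) - α * ∑ j, M k j * x j ≤ α * f k x - α * ∑ j, M k j * x j := by
        have := hscale k
        have := hpos k 0 le_rfl
        nlinarith
      calc (1 - M)⁻¹ i k * (f k (α • x) - α * ∑ j, M k j * x j)
          ≤ (1 - M)⁻¹ i k * (α * f k x - α * ∑ j, M k j * x j) :=
            mul_le_mul_of_nonneg_left h1 (hB0 i k)
        _ = α * ((1 - M)⁻¹ i k * (f k x - ∑ j, M k j * x j)) := by ring
    · refine ⟨i, Finset.mem_univ i, ?_⟩
      rw [hSα i]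
      have hBipos : 0 < (1 - M)⁻¹ i i := lt_of_lt_of_le one_pos (hBii i)
      have h1 : f i (α • x) - α * ∑ j, M i j * x j < α * f i x - α * ∑ j, M i j * x j := by
        have := hscale i
        have := hpos i 0 le_rfl
        nlinarith
      calc (1 - M)⁻¹ i i * (f i (α • x) - α * ∑ j, M i j * x j)
          < (1 - M)⁻¹ i i * (α * f i x - α * ∑ j, M i j * x j) :=
            mul_lt_mul_of_pos_left h1 hBipos
        _ = α * ((1 - M)⁻¹ i i * (f i x - ∑ j, M i j * x j)) := by ring
  · -- monotonicity
    intro x y hx hy hxy i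
    rw [hTAexp, hTAexp]
    apply Finset.sum_le_sum
    intro k _
    apply mul_le_mul_of_nonneg_left ?_ (hB0 i k)
    have h1 := hkey k x y hx hxy
    have h2 : ∑ j, M k j * (y j - x j) = ∑ j, M k j * y j - ∑ j, M k j * x j := by
      rw [← Finset.sum_sub_distrib]
      exact Finset.sum_congr rfl fun j _ => by ring
    rw [h2] at h1
    linarith
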